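/- Let $V_1,\ldots,V_{n+1}$ be exchangeable real-valued random variables (e.g., i.i.d.), and let $Q(\alpha; \frac{1}{n+1}\sum_{i=1}^{n+1}\delta_{V_i})$ denote the level-$\alpha$ empirical quantile of $V_1,\ldots,V_{n+1}$, defined as $\inf\{t : \frac{1}{n+1}\#\{i : V_i\le t\}\ge\alpha\}$. Then for any integer $k$ with $k\ge \lceil (n+1)\alpha\rceil$, $\mathbb{P}\big(V_{n+1} \le Q(\tfrac{k}{n+1}; \tfrac{1}{n+1}\sum_{i=1}^{n+1}\delta_{V_i})\big) \ge \alpha$. -/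

import Mathlib

open Finset MeasureTheory

noncomputable def equantile {m : ℕ} (w : Fin m → ℝ) (V : Fin m → EReal) (α : ℝ) : EReal :=
  sInf {t : EReal | α ≤ ∑ i, if V i ≤ t then w i else 0}

variable {n k : ℕ}

/-- The count of values ≤ t. -/
noncomputable def cnt (v : Fin (n + 1) → EReal) (t : EReal) : ℕ :=
  (Finset.univ.filter fun i => v i ≤ t).card

lemma cnt_mono (v : Fin (n + 1) → EReal) {s t : EReal} (h : s ≤ t) : cnt v s ≤ cnt v t := by
  apply Finset.card_le_card
  intro i hi
  simp only [Finset.mem_filter, Finset.mem_univ, true_and] at hi ⊢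
  exact le_trans hi h

lemma sum_if_eq (v : Fin (n + 1) → EReal) (t : EReal) :
    (∑ i, if v i ≤ t then 1 / ((n : ℝ) + 1) else 0) = (cnt v t : ℝ) / ((n : ℝ) + 1) := by
  rw [← Finset.sum_filter, Finset.sum_const, cnt, nsmul_eq_mul]
  ring

lemma mem_S_iff (v : Fin (n + 1) → EReal) (t : EReal) :
    ((k : ℝ) / ((n : ℝ) + 1) ≤ ∑ i, if v i ≤ t then 1 / ((n : ℝ) + 1) else 0) ↔ k ≤ cnt v t := by
  rw [sum_if_eq, div_le_div_iff_of_pos_right (by positivity), Nat.cast_le]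

lemma isLeast_S (hk1 : 1 ≤ k) (hk2 : k ≤ n + 1) (v : Fin (n + 1) → EReal) :
    IsLeast {t : EReal | k ≤ cnt v t} (v (Tuple.sort v ⟨k - 1, by omega⟩)) := by
  set σ := Tuple.sort v with hσ
  set q := v (σ ⟨k - 1, by omega⟩) with hq
  have hmono := Tuple.monotone_sort v
  constructor
  · -- k ≤ cnt v q
    have hsub : (Finset.univ.map ⟨fun j : Fin k => σ (Fin.castLE hk2 j),
        fun a b hab => by
          have := σ.injective hab
          exact Fin.castLE_injective hk2 this⟩) ⊆
        Finset.univ.filter fun i => v i ≤ q := by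
      intro i hi
      simp only [Finset.mem_map, Finset.mem_univ, Function.Embedding.coeFn_mk, true_and] at hi
      obtain ⟨j, rfl⟩ := hi
      simp only [Finset.mem_filter, Finset.mem_univ, true_and]
      have : (Fin.castLE hk2 j : Fin (n + 1)) ≤ ⟨k - 1, by omega⟩ := by
        simp [Fin.le_def]; omega
      exact hmono this
    have := Finset.card_le_card hsub
    simpa [cnt] using this
  · -- lower bound
    intro t ht
    simp only [Set.mem_setOf_eq] at ht
    by_contra hlt
    push_neg at hlt
    -- all j with k-1 ≤ j have t < v (σ j)
    have hbig : ∀ j : Fin (n + 1), k - 1 ≤ (j : ℕ) → ¬ v (σ j) ≤ t := by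
      intro j hj hle
      have : q ≤ v (σ j) := hmono (by simp [Fin.le_def]; omega)
      exact absurd (le_trans this hle) (not_le.mpr hlt)
    have himg : (Finset.univ.filter fun i => v i ≤ t) =
        (Finset.univ.filter fun j => v (σ j) ≤ t).image σ := by
      ext i
      simp only [Finset.mem_filter, Finset.mem_univ, true_and, Finset.mem_image]
      constructor
      · intro h; exact ⟨σ.symm i, by simpa using h, by simp⟩
      · rintro ⟨j, hj, rfl⟩; exact hj
    have hsub2 : (Finset.univ.filter fun j : Fin (n + 1) => v (σ j) ≤ t) ⊆
        Finset.univ.filter fun j : Fin (n + 1) => (j : ℕ) < k - 1 := by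
      intro j hj
      simp only [Finset.mem_filter, Finset.mem_univ, true_and] at hj ⊢
      by_contra h
      exact hbig j (by omega) hj
    have hcard2 : (Finset.univ.filter fun j : Fin (n + 1) => (j : ℕ) < k - 1).card ≤ k - 1 := by
      have := Finset.card_le_card_of_injOn (fun j : Fin (n + 1) => (j : ℕ))
        (s := Finset.univ.filter fun j : Fin (n + 1) => (j : ℕ) < k - 1)
        (t := Finset.range (k - 1))
        (fun a ha => by
          simp only [Finset.mem_coe, Finset.mem_filter, Finset.mem_univ, true_and] at ha
          exact Finset.mem_range.mpr ha)
        (fun a _ b _ hab => Fin.ext hab)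
      simpa using this
    have : cnt v t ≤ k - 1 := by
      rw [cnt, himg, Finset.card_image_of_injective _ σ.injective]
      exact le_trans (Finset.card_le_card hsub2) hcard2
    omega

lemma equantile_eq (hk1 : 1 ≤ k) (hk2 : k ≤ n + 1) (v : Fin (n + 1) → EReal) :
    equantile (fun _ : Fin (n + 1) => 1 / ((n : ℝ) + 1)) v ((k : ℝ) / ((n : ℝ) + 1)) =
      v (Tuple.sort v ⟨k - 1, by omega⟩) := by
  have h := isLeast_S hk1 hk2 v
  have : {t : EReal | (k : ℝ) / ((n : ℝ) + 1) ≤ ∑ i, if v i ≤ t then 1 / ((n : ℝ) + 1) else 0}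
      = {t : EReal | k ≤ cnt v t} := by
    ext t; exact mem_S_iff v t
  rw [equantile, this]
  exact h.csInf_eq

lemma cnt_equantile (hk1 : 1 ≤ k) (hk2 : k ≤ n + 1) (v : Fin (n + 1) → EReal) :
    k ≤ cnt v (equantile (fun _ : Fin (n + 1) => 1 / ((n : ℝ) + 1)) v ((k : ℝ) / ((n : ℝ) + 1))) := by
  rw [equantile_eq hk1 hk2]
  exact (isLeast_S hk1 hk2 v).1

lemma equantile_le_iff (hk1 : 1 ≤ k) (hk2 : k ≤ n + 1) (v : Fin (n + 1) → EReal) (a : EReal) :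
    equantile (fun _ : Fin (n + 1) => 1 / ((n : ℝ) + 1)) v ((k : ℝ) / ((n : ℝ) + 1)) ≤ a ↔
      k ≤ cnt v a := by
  rw [equantile_eq hk1 hk2]
  constructor
  · intro h
    exact le_trans (isLeast_S hk1 hk2 v).1 (cnt_mono v h)
  · intro h
    exact (isLeast_S hk1 hk2 v).2 h

lemma equantile_perm (v : Fin (n + 1) → EReal) (σ : Equiv.Perm (Fin (n + 1))) (α : ℝ) :
    equantile (fun _ : Fin (n + 1) => 1 / ((n : ℝ) + 1)) (fun j => v (σ j)) α =
      equantile (fun _ : Fin (n + 1) => 1 / ((n : ℝ) + 1)) v α := by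
  unfold equantile
  congr 1
  ext t
  simp only [Set.mem_setOf_eq]
  rw [Equiv.sum_comp σ (fun i => if v i ≤ t then 1 / ((n : ℝ) + 1) else 0)]

lemma measurable_equantile (hk1 : 1 ≤ k) (hk2 : k ≤ n + 1) :
    Measurable (fun x : Fin (n + 1) → ℝ =>
      equantile (fun _ : Fin (n + 1) => 1 / ((n : ℝ) + 1)) (fun i => (x i : EReal))
        ((k : ℝ) / ((n : ℝ) + 1))) := by
  apply measurable_of_Iic
  intro a
  have heq : (fun x : Fin (n + 1) → ℝ =>
      equantile (fun _ : Fin (n + 1) => 1 / ((n : ℝ) + 1)) (fun i => (x i : EReal))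
        ((k : ℝ) / ((n : ℝ) + 1))) ⁻¹' Set.Iic a =
      ⋃ (s : Finset (Fin (n + 1))) (_ : k ≤ s.card),
        ⋂ i ∈ s, {x : Fin (n + 1) → ℝ | (x i : EReal) ≤ a} := by
    ext x
    simp only [Set.mem_preimage, Set.mem_Iic, Set.mem_iUnion, Set.mem_iInter, Set.mem_setOf_eq]
    rw [equantile_le_iff hk1 hk2]
    constructor
    · intro h
      refine ⟨Finset.univ.filter fun i => ((x i : EReal)) ≤ a, h, ?_⟩
      intro i hi
      exact (Finset.mem_filter.mp hi).2
    · rintro ⟨s, hs, h⟩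
      refine le_trans hs (Finset.card_le_card ?_)
      intro i hi
      simp only [Finset.mem_filter, Finset.mem_univ, true_and]
      exact h i hi
  rw [heq]
  refine MeasurableSet.iUnion fun s => MeasurableSet.iUnion fun _ =>
    MeasurableSet.biInter (Set.to_countable _) fun i _ => ?_
  exact (measurable_coe_real_ereal.comp (measurable_pi_apply i)) measurableSet_Iic

theorem stmt1 (n : ℕ) {Ω : Type*} [MeasurableSpace Ω] (μ : Measure Ω) [IsProbabilityMeasure μ]
    (V : Fin (n + 1) → Ω → ℝ) (hmeas : ∀ i, Measurable (V i))
    (hexch : ∀ σ : Equiv.Perm (Fin (n + 1)),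
      Measure.map (fun ω i => V (σ i) ω) μ = Measure.map (fun ω i => V i ω) μ)
    (α : ℝ) (hα : α ∈ Set.Ioo (0 : ℝ) 1) (k : ℕ) (hk : ((n : ℝ) + 1) * α ≤ k) :
    ENNReal.ofReal α ≤
      μ {ω | (V (Fin.last n) ω : EReal) ≤
        equantile (fun _ : Fin (n + 1) => 1 / ((n : ℝ) + 1))
          (fun i => (V i ω : EReal)) ((k : ℝ) / ((n : ℝ) + 1))} := by
  obtain ⟨hα0, hα1⟩ := hα
  by_cases hk2 : k ≤ n + 1
  · -- main case
    have hk1 : 1 ≤ k := by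
      by_contra h
      push_neg at h
      interval_cases k
      · simp only [Nat.cast_zero] at hk
        nlinarith
    set q' : (Fin (n + 1) → ℝ) → EReal := fun x =>
      equantile (fun _ : Fin (n + 1) => 1 / ((n : ℝ) + 1)) (fun i => (x i : EReal))
        ((k : ℝ) / ((n : ℝ) + 1)) with hq'
    have hq'meas : Measurable q' := measurable_equantile hk1 hk2
    set A : Fin (n + 1) → Set Ω := fun i =>
      {ω | (V i ω : EReal) ≤ q' (fun j => V j ω)} with hA
    have hVmeas : Measurable (fun ω => (fun j => V j ω)) := measurable_pi_lambda _ hmeas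
    have hAmeas : ∀ i, MeasurableSet (A i) := by
      intro i
      exact measurableSet_le (measurable_coe_real_ereal.comp ((measurable_pi_apply i).comp hVmeas))
        (hq'meas.comp hVmeas)
    have hB : MeasurableSet {x : Fin (n + 1) → ℝ | (x (Fin.last n) : EReal) ≤ q' x} :=
      measurableSet_le (measurable_coe_real_ereal.comp (measurable_pi_apply _)) hq'meas
    have hAeq : ∀ i, μ (A i) = μ (A (Fin.last n)) := by
      intro i
      set σ := Equiv.swap i (Fin.last n) with hσdef
      have hm1 : Measurable (fun ω (j : Fin (n + 1)) => V (σ j) ω) :=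
        measurable_pi_lambda _ fun j => hmeas _
      have h1 : A i = (fun ω j => V (σ j) ω) ⁻¹'
          {x : Fin (n + 1) → ℝ | (x (Fin.last n) : EReal) ≤ q' x} := by
        ext ω
        simp only [hA, Set.mem_setOf_eq, Set.mem_preimage]
        have h2 : q' (fun j => V (σ j) ω) = q' (fun j => V j ω) :=
          equantile_perm (fun j => (V j ω : EReal)) σ _
        rw [h2, Equiv.swap_apply_right]
      have h3 : A (Fin.last n) = (fun ω (j : Fin (n + 1)) => V j ω) ⁻¹'
          {x : Fin (n + 1) → ℝ | (x (Fin.last n) : EReal) ≤ q' x} := rfl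
      rw [h1, h3, ← Measure.map_apply hm1 hB, ← Measure.map_apply hVmeas hB, hexch σ]
    have hpoint : ∀ ω, (k : ENNReal) ≤ ∑ i, Set.indicator (A i) (fun _ => (1 : ENNReal)) ω := by
      intro ω
      have hsum : ∑ i, Set.indicator (A i) (fun _ => (1 : ENNReal)) ω =
          ((Finset.univ.filter fun i => ω ∈ A i).card : ENNReal) := by
        simp only [Set.indicator_apply]
        exact Finset.sum_boole _ _
      rw [hsum]
      have hcnt : (Finset.univ.filter fun i => ω ∈ A i) =
          Finset.univ.filter fun i => (V i ω : EReal) ≤ q' (fun j => V j ω) := by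
        congr 1
      rw [hcnt]
      have := cnt_equantile hk1 hk2 (fun i => (V i ω : EReal))
      rw [cnt] at this
      refine Nat.cast_le.mpr ?_
      simp only [hq']
      exact this
    have hkey : (k : ENNReal) ≤ ((n : ENNReal) + 1) * μ (A (Fin.last n)) := by
      calc (k : ENNReal) = ∫⁻ _, (k : ENNReal) ∂μ := by simp
        _ ≤ ∫⁻ ω, ∑ i, Set.indicator (A i) (fun _ => (1 : ENNReal)) ω ∂μ :=
            lintegral_mono hpoint
        _ = ∑ i, ∫⁻ ω, Set.indicator (A i) (fun _ => (1 : ENNReal)) ω ∂μ :=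
            lintegral_finset_sum _ fun i _ => measurable_const.indicator (hAmeas i)
        _ = ∑ i : Fin (n + 1), μ (A i) := by
            refine Finset.sum_congr rfl fun i _ => ?_
            exact lintegral_indicator_one (hAmeas i)
        _ = ((n : ENNReal) + 1) * μ (A (Fin.last n)) := by
            rw [Finset.sum_congr rfl fun i _ => hAeq i]
            simp [Finset.card_univ, mul_comm]
    have hstep : (k : ENNReal) / ((n : ENNReal) + 1) ≤ μ (A (Fin.last n)) := by
      rw [ENNReal.div_le_iff_le_mul (Or.inl (by simp)) (Or.inl (by simp [ENNReal.add_ne_top]))]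
      rw [mul_comm] at hkey
      exact hkey
    refine le_trans ?_ hstep
    rw [ENNReal.le_div_iff_mul_le (Or.inl (by simp)) (Or.inl (by simp [ENNReal.add_ne_top]))]
    have h5 : ((n : ENNReal) + 1) = ENNReal.ofReal ((n : ℝ) + 1) := by
      rw [ENNReal.ofReal_add (by positivity) zero_le_one]
      simp [ENNReal.ofReal_natCast]
    rw [h5, ← ENNReal.ofReal_mul hα0.le, ← ENNReal.ofReal_natCast k]
    apply ENNReal.ofReal_le_ofReal
    nlinarith
  · -- degenerate case: quantile is ⊤
    push_neg at hk2
    have huniv : {ω | (V (Fin.last n) ω : EReal) ≤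
        equantile (fun _ : Fin (n + 1) => 1 / ((n : ℝ) + 1))
          (fun i => (V i ω : EReal)) ((k : ℝ) / ((n : ℝ) + 1))} = Set.univ := by
      ext ω
      simp only [Set.mem_setOf_eq, Set.mem_univ, iff_true]
      have hempty : {t : EReal | (k : ℝ) / ((n : ℝ) + 1) ≤
          ∑ i, if (V i ω : EReal) ≤ t then 1 / ((n : ℝ) + 1) else 0} = ∅ := by
        ext t
        simp only [Set.mem_setOf_eq, Set.mem_empty_iff_false, iff_false, not_le]
        rw [sum_if_eq]
        rw [div_lt_div_iff_of_pos_right (by positivity)]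
        have hle : cnt (fun i => (V i ω : EReal)) t ≤ n + 1 := by
          rw [cnt]
          calc (Finset.univ.filter fun i => ((V i ω : EReal)) ≤ t).card
              ≤ (Finset.univ : Finset (Fin (n + 1))).card := Finset.card_filter_le _ _
            _ = n + 1 := by simp
        have : (cnt (fun i => (V i ω : EReal)) t : ℝ) ≤ (n : ℝ) + 1 := by exact_mod_cast hle
        have hk2' : ((n : ℝ) + 1) < k := by exact_mod_cast hk2
        linarith
      rw [equantile, hempty, sInf_empty]
      exact le_top
    rw [huniv, measure_univ]
    exact ENNReal.ofReal_le_one.mpr hα1.le
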